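/- Let θ₁, θ₂, θ₃ ∈ (0, π/2) with θ₁ + θ₂ + θ₃ = π. Then T(θ₁,θ₂,θ₃) − A(θ₁,θ₂,θ₃) ≤ 3√3 − 3π/2, with equality if and only if θ₁ = θ₂ = θ₃ = π/3. That is, the uncovered area T − A attains its maximum value only at the equilateral configuration. -/

import Mathlib

open Real

/-- `t θ = tan θ`: twice the area of a right triangle with unit leg and adjacent angle `θ`. -/
noncomputable def tFun (θ : ℝ) : ℝ := tan θ

/-- `a θ = (π/2 − θ)·tan²θ`: the area of the circular sector of radius `tan θ`. -/
noncomputable def aFun (θ : ℝ) : ℝ := (π / 2 - θ) * tan θ ^ 2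

/-- Area of the triangle of centers, normalized to inradius `1`. -/
noncomputable def Tangles (θ₁ θ₂ θ₃ : ℝ) : ℝ := tFun θ₁ + tFun θ₂ + tFun θ₃

/-- Area of the triangle covered by the three circles. -/
noncomputable def Aangles (θ₁ θ₂ θ₃ : ℝ) : ℝ := aFun θ₁ + aFun θ₂ + aFun θ₃

namespace UncoveredAux

noncomputable def F (θ : ℝ) : ℝ := tan θ - (π / 2 - θ) * tan θ ^ 2

noncomputable def F1 (θ : ℝ) : ℝ :=
  1 / cos θ ^ 2 + tan θ ^ 2 - (π / 2 - θ) * (2 * tan θ / cos θ ^ 2)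

lemma key (x : ℝ) (hx : 0 < x) (hx' : x < π) : 3 * sin x < x * (2 + cos x) := by
  set g : ℝ → ℝ := fun y => y * (2 + cos y) - 3 * sin y with hg
  have hder : ∀ y : ℝ, HasDerivAt g (2 - 2 * cos y - y * sin y) y := by
    intro y
    have h1 := (hasDerivAt_id y).mul ((hasDerivAt_const y 2).add (hasDerivAt_cos y))
    have h2 : HasDerivAt (fun y : ℝ => 3 * sin y) (3 * cos y) y := by
      simpa using (hasDerivAt_sin y).const_mul 3
    have := h1.sub h2
    refine this.congr_deriv ?_
    simp only [id_eq, Pi.add_apply]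
    ring
  have hpos : ∀ y ∈ Set.Ioo (0:ℝ) π, 0 < 2 - 2 * cos y - y * sin y := by
    intro y hy
    have hy0 : 0 < y := hy.1
    have hyp : y < π := hy.2
    have hu0 : 0 < y / 2 := by linarith
    have hu2 : y / 2 < π / 2 := by linarith
    have hs : 0 < sin (y / 2) := sin_pos_of_pos_of_lt_pi hu0 (by linarith [pi_pos])
    have hc : 0 < cos (y / 2) := cos_pos_of_mem_Ioo ⟨by linarith, hu2⟩
    have htan : y / 2 < tan (y / 2) := lt_tan hu0 hu2
    have hsin2 : sin y = 2 * sin (y / 2) * cos (y / 2) := by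
      have h := sin_two_mul (y / 2)
      rw [show 2 * (y / 2) = y by ring] at h
      exact h
    have hcos2 : cos y = 1 - 2 * sin (y / 2) ^ 2 := by
      have h := cos_two_mul' (y / 2)
      rw [show 2 * (y / 2) = y by ring] at h
      have := sin_sq_add_cos_sq (y / 2)
      linarith
    have htan' : sin (y / 2) = cos (y / 2) * tan (y / 2) := by
      rw [tan_eq_sin_div_cos]; field_simp
    have h1 : y * cos (y / 2) < 2 * sin (y / 2) := by
      calc y * cos (y / 2) = 2 * cos (y / 2) * (y / 2) := by ring
        _ < 2 * cos (y / 2) * tan (y / 2) := by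
            apply mul_lt_mul_of_pos_left htan (by linarith)
        _ = 2 * sin (y / 2) := by rw [htan']; ring
    have : 2 - 2 * cos y - y * sin y = 2 * sin (y / 2) * (2 * sin (y / 2) - y * cos (y / 2)) := by
      rw [hsin2, hcos2]; ring
    rw [this]
    have : 0 < 2 * sin (y / 2) - y * cos (y / 2) := by linarith
    positivity
  have hmono : StrictMonoOn g (Set.Icc 0 π) := by
    apply strictMonoOn_of_deriv_pos (convex_Icc 0 π)
    · exact (Continuous.sub (continuous_id.mul (by continuity)) (by continuity)).continuousOn
    · intro y hy
      rw [interior_Icc] at hy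
      rw [(hder y).deriv]
      exact hpos y hy
  have h0 : g 0 = 0 := by simp [hg]
  have := hmono (Set.left_mem_Icc.2 pi_pos.le) ⟨hx.le, hx'.le⟩ hx
  rw [h0] at this
  simp only [hg] at this
  linarith

lemma hasDerivAt_F {θ : ℝ} (hc : cos θ ≠ 0) : HasDerivAt F (F1 θ) θ := by
  have h1 : HasDerivAt tan (1 / cos θ ^ 2) θ := hasDerivAt_tan hc
  have h2 : HasDerivAt (fun θ => tan θ ^ 2) (2 * tan θ ^ 1 * (1 / cos θ ^ 2)) θ := by
    simpa using h1.fun_pow 2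
  have h3 : HasDerivAt (fun θ : ℝ => π / 2 - θ) (-1) θ := by
    simpa using (hasDerivAt_id θ).const_sub (π / 2)
  have h4 := h3.mul h2
  have := h1.sub h4
  refine this.congr_deriv ?_
  simp only [F1]
  ring

lemma hasDerivAt_F1 {θ : ℝ} (hc : cos θ ≠ 0) :
    HasDerivAt F1 ((6 * sin θ * cos θ - (π - 2 * θ) * (1 + 2 * sin θ ^ 2)) / cos θ ^ 4) θ := by
  have hc2 : cos θ ^ 2 ≠ 0 := pow_ne_zero 2 hc
  have hcossq : HasDerivAt (fun θ => cos θ ^ 2) (2 * cos θ ^ 1 * (-sin θ)) θ :=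
    (hasDerivAt_cos θ).pow 2
  have hinv : HasDerivAt (fun θ => (cos θ ^ 2)⁻¹)
      (-(2 * cos θ ^ 1 * (-sin θ)) / (cos θ ^ 2) ^ 2) θ := hcossq.inv hc2
  have htan : HasDerivAt tan (1 / cos θ ^ 2) θ := hasDerivAt_tan hc
  have htansq : HasDerivAt (fun θ => tan θ ^ 2) (2 * tan θ ^ 1 * (1 / cos θ ^ 2)) θ := by
    simpa using htan.fun_pow 2
  have h3 : HasDerivAt (fun θ : ℝ => π / 2 - θ) (-1) θ := by
    simpa using (hasDerivAt_id θ).const_sub (π / 2)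
  -- derivative of 2 * tan θ / cos θ ^ 2 = 2 * tan θ * (cos θ ^ 2)⁻¹
  have hq : HasDerivAt (fun θ => 2 * tan θ * (cos θ ^ 2)⁻¹)
      ((2 * (1 / cos θ ^ 2)) * (cos θ ^ 2)⁻¹
        + 2 * tan θ * (-(2 * cos θ ^ 1 * (-sin θ)) / (cos θ ^ 2) ^ 2)) θ :=
    (htan.const_mul 2).mul hinv
  have hprod := h3.mul hq
  have hfirst : HasDerivAt (fun θ => 1 / cos θ ^ 2)
      (-(2 * cos θ ^ 1 * (-sin θ)) / (cos θ ^ 2) ^ 2) θ := by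
    simpa [one_div] using hinv
  have hF1' : HasDerivAt F1
      ((-(2 * cos θ ^ 1 * (-sin θ)) / (cos θ ^ 2) ^ 2 + 2 * tan θ ^ 1 * (1 / cos θ ^ 2))
        - ((-1) * (2 * tan θ * (cos θ ^ 2)⁻¹)
          + (π / 2 - θ) * ((2 * (1 / cos θ ^ 2)) * (cos θ ^ 2)⁻¹
            + 2 * tan θ * (-(2 * cos θ ^ 1 * (-sin θ)) / (cos θ ^ 2) ^ 2)))) θ := by
    have := (hfirst.add htansq).sub hprod
    exact this
  convert hF1' using 1
  rw [tan_eq_sin_div_cos]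
  field_simp
  ring

lemma strictConcave : StrictConcaveOn ℝ (Set.Ioo 0 (π / 2)) F := by
  have hcosne : ∀ θ ∈ Set.Ioo (0:ℝ) (π / 2), cos θ ≠ 0 := fun θ hθ =>
    (cos_pos_of_mem_Ioo ⟨by linarith [hθ.1, pi_pos], hθ.2⟩).ne'
  apply StrictAntiOn.strictConcaveOn_of_deriv (convex_Ioo 0 (π / 2))
  · intro θ hθ
    exact ((hasDerivAt_F (hcosne θ hθ)).continuousAt).continuousWithinAt
  · rw [interior_Ioo]
    have hderivF : ∀ θ ∈ Set.Ioo (0:ℝ) (π / 2), deriv F θ = F1 θ := fun θ hθ =>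
      (hasDerivAt_F (hcosne θ hθ)).deriv
    have hanti : StrictAntiOn F1 (Set.Ioo 0 (π / 2)) := by
      apply strictAntiOn_of_deriv_neg (convex_Ioo 0 (π / 2))
      · intro θ hθ
        exact ((hasDerivAt_F1 (hcosne θ hθ)).continuousAt).continuousWithinAt
      · rw [interior_Ioo]
        intro θ hθ
        rw [(hasDerivAt_F1 (hcosne θ hθ)).deriv]
        have hcpos : 0 < cos θ := cos_pos_of_mem_Ioo ⟨by linarith [hθ.1, pi_pos], hθ.2⟩
        have hx0 : 0 < π - 2 * θ := by linarith [hθ.2]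
        have hxpi : π - 2 * θ < π := by linarith [hθ.1]
        have hkey := key (π - 2 * θ) hx0 hxpi
        have hsin : sin (π - 2 * θ) = 2 * sin θ * cos θ := by
          rw [sin_pi_sub, sin_two_mul]
        have hcos : cos (π - 2 * θ) = 2 * sin θ ^ 2 - 1 := by
          rw [cos_pi_sub, cos_two_mul']
          linarith [sin_sq_add_cos_sq θ]
        rw [hsin, hcos] at hkey
        have hnum : 6 * sin θ * cos θ - (π - 2 * θ) * (1 + 2 * sin θ ^ 2) < 0 := by nlinarith
        have hc4 : 0 < cos θ ^ 4 := by positivity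
        exact div_neg_of_neg_of_pos hnum hc4
    intro a ha b hb hab
    rw [hderivF a ha, hderivF b hb]
    exact hanti ha hb hab

lemma F_pi_div_three : F (π / 3) = Real.sqrt 3 - π / 2 := by
  have h3 : Real.sqrt 3 ^ 2 = 3 := Real.sq_sqrt (by norm_num)
  simp only [F, tan_pi_div_three]
  rw [h3]
  ring

lemma combine {a b c : ℝ} (ha : a ∈ Set.Ioo 0 (π / 2)) (hb : b ∈ Set.Ioo 0 (π / 2))
    (hc : c ∈ Set.Ioo 0 (π / 2)) (hsum : a + b + c = π) :
    F a + F b + F c ≤ 3 * Real.sqrt 3 - 3 * π / 2 ∧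
      (a ≠ b → F a + F b + F c < 3 * Real.sqrt 3 - 3 * π / 2) := by
  have hconc := strictConcave
  have hm : (a + b) / 2 ∈ Set.Ioo (0:ℝ) (π / 2) := by
    constructor
    · have := ha.1; have := hb.1; linarith
    · have := ha.2; have := hb.2; linarith
  have step2 : (2/3 : ℝ) * F ((a + b) / 2) + (1/3 : ℝ) * F c ≤ F (π / 3) := by
    have := hconc.concaveOn.2 hm hc (by norm_num : (0:ℝ) ≤ 2/3) (by norm_num : (0:ℝ) ≤ 1/3)
      (by norm_num)
    have harg : (2/3 : ℝ) • ((a + b) / 2) + (1/3 : ℝ) • c = π / 3 := by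
      simp only [smul_eq_mul]; linarith
    rw [harg] at this
    simpa [smul_eq_mul] using this
  have hF3 : F (π / 3) = Real.sqrt 3 - π / 2 := F_pi_div_three
  have step1le : (1/2 : ℝ) * F a + (1/2 : ℝ) * F b ≤ F ((a + b) / 2) := by
    have := hconc.concaveOn.2 ha hb (by norm_num : (0:ℝ) ≤ 1/2) (by norm_num : (0:ℝ) ≤ 1/2)
      (by norm_num)
    have harg : (1/2 : ℝ) • a + (1/2 : ℝ) • b = (a + b) / 2 := by
      simp only [smul_eq_mul]; ring
    rw [harg] at this
    simpa [smul_eq_mul] using this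
  constructor
  · rw [hF3] at step2; linarith
  · intro hne
    have step1lt : (1/2 : ℝ) * F a + (1/2 : ℝ) * F b < F ((a + b) / 2) := by
      have := hconc.2 ha hb hne (by norm_num : (0:ℝ) < 1/2) (by norm_num : (0:ℝ) < 1/2)
        (by norm_num)
      have harg : (1/2 : ℝ) • a + (1/2 : ℝ) • b = (a + b) / 2 := by
        simp only [smul_eq_mul]; ring
      rw [harg] at this
      simpa [smul_eq_mul] using this
    rw [hF3] at step2; linarith

end UncoveredAux

theorem uncovered_area_max (θ₁ θ₂ θ₃ : ℝ)
    (h₁ : θ₁ ∈ Set.Ioo 0 (π / 2)) (h₂ : θ₂ ∈ Set.Ioo 0 (π / 2))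
    (h₃ : θ₃ ∈ Set.Ioo 0 (π / 2)) (hsum : θ₁ + θ₂ + θ₃ = π) :
    Tangles θ₁ θ₂ θ₃ - Aangles θ₁ θ₂ θ₃ ≤ 3 * Real.sqrt 3 - 3 * π / 2 ∧
      (Tangles θ₁ θ₂ θ₃ - Aangles θ₁ θ₂ θ₃ = 3 * Real.sqrt 3 - 3 * π / 2 ↔
        θ₁ = π / 3 ∧ θ₂ = π / 3 ∧ θ₃ = π / 3) := by
  open UncoveredAux in
  have hTA : Tangles θ₁ θ₂ θ₃ - Aangles θ₁ θ₂ θ₃ = F θ₁ + F θ₂ + F θ₃ := by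
    simp only [Tangles, Aangles, tFun, aFun, UncoveredAux.F]
    ring
  have hle := (UncoveredAux.combine h₁ h₂ h₃ hsum).1
  refine ⟨by rw [hTA]; exact hle, ?_, ?_⟩
  · intro heq
    by_contra hcon
    rw [hTA] at heq
    rcases eq_or_ne θ₁ θ₂ with h12 | h12
    · rcases eq_or_ne θ₂ θ₃ with h23 | h23
      · exact hcon ⟨by linarith, by linarith, by linarith⟩
      · have := (UncoveredAux.combine h₂ h₃ h₁ (by linarith)).2 h23
        linarith
    · have := (UncoveredAux.combine h₁ h₂ h₃ hsum).2 h12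
      linarith
  · rintro ⟨e1, e2, e3⟩
    subst e1; subst e2; subst e3
    rw [hTA, UncoveredAux.F_pi_div_three]
    ring
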